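/- Let W be a uniformly recurrent infinite word over alphabet A with at most linear recurrence function, let B be a finite alphabet, and let ψ : A* → B* be a non-erasing morphism. Then ψ(W) is uniformly recurrent with at most linear recurrence function. -/

import Mathlib

def factorAt {A : Type*} (W : ℕ → A) (i n : ℕ) : List A :=
  (List.range n).map (fun j => W (i + j))

def IsFactorOf {A : Type*} (u : List A) (W : ℕ → A) : Prop :=
  ∃ i, u = factorAt W i u.length

namespace Stmt4Aux

lemma factorAt_length {A : Type*} (W : ℕ → A) (i n : ℕ) : (factorAt W i n).length = n := by
  simp [factorAt]

lemma isFactorOf_factorAt {A : Type*} (W : ℕ → A) (i n : ℕ) : IsFactorOf (factorAt W i n) W :=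
  ⟨i, by rw [factorAt_length]⟩

lemma factorAt_append {A : Type*} (W : ℕ → A) (i a b : ℕ) :
    factorAt W i (a + b) = factorAt W i a ++ factorAt W (i + a) b := by
  unfold factorAt
  rw [List.range_add, List.map_append, List.map_map]
  congr 1
  apply List.map_congr_left
  intro x _
  simp [add_assoc]

lemma factorAt_infix {A : Type*} (W : ℕ → A) {i j n m : ℕ} (h1 : i ≤ j) (h2 : j + m ≤ i + n) :
    factorAt W j m <:+: factorAt W i n := by
  have hn : n = (j - i) + (m + (i + n - (j + m))) := by omega
  rw [hn, factorAt_append, factorAt_append]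
  have hij : i + (j - i) = j := by omega
  rw [hij]
  exact ⟨factorAt W i (j - i), factorAt W (j + m) (i + n - (j + m)), by rw [List.append_assoc]⟩

lemma psi_join_infix {A B : Type*} (ψ : A → List B) {a b : List A} (h : a <:+: b) :
    (a.map ψ).flatten <:+: (b.map ψ).flatten := by
  obtain ⟨s, t, rfl⟩ := h
  exact ⟨(s.map ψ).flatten, (t.map ψ).flatten, by simp⟩

def Sfn {A B : Type*} (ψ : A → List B) (W : ℕ → A) (n : ℕ) : ℕ :=
  ((List.range n).map (fun i => ψ (W i))).flatten.length

lemma Sfn_succ {A B : Type*} (ψ : A → List B) (W : ℕ → A) (n : ℕ) :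
    Sfn ψ W (n + 1) = Sfn ψ W n + (ψ (W n)).length := by
  simp [Sfn, List.range_succ]

lemma Sfn_lower {A B : Type*} (ψ : A → List B) (W : ℕ → A) (hne : ∀ a, ψ a ≠ [])
    (a k : ℕ) : Sfn ψ W a + k ≤ Sfn ψ W (a + k) := by
  induction k with
  | zero => simp
  | succ k ih =>
    have h1 : 1 ≤ (ψ (W (a + k))).length := List.length_pos_iff.mpr (hne _)
    have := Sfn_succ ψ W (a + k)
    have h2 : a + (k + 1) = (a + k) + 1 := by ring
    rw [h2]
    omega

lemma Sfn_upper {A B : Type*} (ψ : A → List B) (W : ℕ → A) (K : ℕ)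
    (hK : ∀ i, (ψ (W i)).length ≤ K) (a k : ℕ) : Sfn ψ W (a + k) ≤ Sfn ψ W a + K * k := by
  induction k with
  | zero => simp
  | succ k ih =>
    have h1 := hK (a + k)
    have h2 := Sfn_succ ψ W (a + k)
    have h3 : K * (k + 1) = K * k + K := by ring
    have h4 : a + (k + 1) = (a + k) + 1 := by ring
    rw [h4]
    omega

lemma exists_block {A B : Type*} (ψ : A → List B) (W : ℕ → A) (hne : ∀ a, ψ a ≠ [])
    (p : ℕ) : ∃ n, Sfn ψ W n ≤ p ∧ p < Sfn ψ W (n + 1) := by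
  induction p with
  | zero =>
    refine ⟨0, by simp [Sfn], ?_⟩
    have h1 : 1 ≤ (ψ (W 0)).length := List.length_pos_iff.mpr (hne _)
    have := Sfn_succ ψ W 0
    have h0 : Sfn ψ W 0 = 0 := by simp [Sfn]
    omega
  | succ p ih =>
    obtain ⟨n, h1, h2⟩ := ih
    by_cases h : p + 1 < Sfn ψ W (n + 1)
    · exact ⟨n, by omega, h⟩
    · refine ⟨n + 1, by omega, ?_⟩
      have h3 : 1 ≤ (ψ (W (n + 1))).length := List.length_pos_iff.mpr (hne _)
      have := Sfn_succ ψ W (n + 1)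
      omega

lemma factorAt_V_eq {A B : Type*} (ψ : A → List B) (W : ℕ → A) (V : ℕ → B)
    (hV : ∀ n : ℕ, factorAt V 0 (Sfn ψ W n) = ((List.range n).map (fun i => ψ (W i))).flatten)
    (n m : ℕ) :
    factorAt V (Sfn ψ W n) (Sfn ψ W (n + m) - Sfn ψ W n) = ((factorAt W n m).map ψ).flatten := by
  have h1 : ((List.range (n + m)).map (fun i => ψ (W i))).flatten
      = ((List.range n).map (fun i => ψ (W i))).flatten ++ ((factorAt W n m).map ψ).flatten := by
    rw [List.range_add, List.map_append, List.flatten_append]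
    congr 2
    unfold factorAt
    rw [List.map_map, List.map_map]
    rfl
  have hlen : Sfn ψ W (n + m) = Sfn ψ W n + (((factorAt W n m).map ψ).flatten).length := by
    unfold Sfn
    rw [h1, List.length_append]
  have h2 : factorAt V 0 (Sfn ψ W (n + m))
      = factorAt V 0 (Sfn ψ W n) ++ factorAt V (Sfn ψ W n) (Sfn ψ W (n + m) - Sfn ψ W n) := by
    have heq : Sfn ψ W n + (Sfn ψ W (n + m) - Sfn ψ W n) = Sfn ψ W (n + m) := by omega
    have h2' := factorAt_append V 0 (Sfn ψ W n) (Sfn ψ W (n + m) - Sfn ψ W n)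
    rw [zero_add, heq] at h2'
    exact h2'
  have h3 := hV (n + m)
  rw [h2, hV n, h1] at h3
  exact List.append_cancel_left h3

end Stmt4Aux
open Stmt4Aux in
/-- The image of a uniformly recurrent word with linear recurrence under a non-erasing
morphism is uniformly recurrent with linear recurrence. -/
theorem stmt4 {A B : Type*} (W : ℕ → A)
    (hUR : ∀ v : List A, IsFactorOf v W →
      ∃ m, ∀ u : List A, IsFactorOf u W → u.length = m → v <:+: u)
    (C₃ : ℕ)
    (hrec : ∀ N ≥ 1, ∀ u v : List A, IsFactorOf u W → u.length = C₃ * N →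
      IsFactorOf v W → v.length = N → v <:+: u)
    (ψ : A → List B) (hne : ∀ a, ψ a ≠ [])
    (V : ℕ → B)
    (hV : ∀ n : ℕ, factorAt V 0 (((List.range n).map (fun i => ψ (W i))).flatten.length)
          = ((List.range n).map (fun i => ψ (W i))).flatten) :
    (∀ v : List B, IsFactorOf v V →
      ∃ m, ∀ u : List B, IsFactorOf u V → u.length = m → v <:+: u) ∧
    ∃ C : ℕ, ∀ N ≥ 1, ∀ u v : List B, IsFactorOf u V → u.length = C * N →
      IsFactorOf v V → v.length = N → v <:+: u := by
  have hV' : ∀ n : ℕ, factorAt V 0 (Sfn ψ W n)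
      = ((List.range n).map (fun i => ψ (W i))).flatten := hV
  -- every letter of W lies in the factor w₀
  have hW1 : ∀ i : ℕ, IsFactorOf [W i] W := fun i => ⟨i, by simp [factorAt, List.range_succ]⟩
  have hC₃ : 1 ≤ C₃ := by
    by_contra h
    have h0 : C₃ = 0 := by omega
    have hnil : IsFactorOf ([] : List A) W := ⟨0, by simp [factorAt]⟩
    have := hrec 1 le_rfl [] [W 0] hnil (by simp [h0]) (hW1 0) rfl
    simp at this
  set w₀ : List A := factorAt W 0 C₃ with hw₀
  have hmem : ∀ i : ℕ, W i ∈ w₀ := by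
    intro i
    have h := hrec 1 le_rfl w₀ [W i] (isFactorOf_factorAt W 0 C₃)
      (by rw [factorAt_length, mul_one]) (hW1 i) rfl
    exact h.subset (List.mem_singleton_self _)
  set K : ℕ := (w₀.map (fun a => (ψ a).length)).sum with hKdef
  have hK : ∀ i : ℕ, (ψ (W i)).length ≤ K := fun i =>
    List.single_le_sum (fun x _ => Nat.zero_le x) _
      (List.mem_map_of_mem (hmem i))
  have hK1 : 1 ≤ K := le_trans (List.length_pos_iff.mpr (hne (W 0))) (hK 0)
  set C : ℕ := K * (C₃ + 1) with hCdef
  have key : ∀ N ≥ 1, ∀ u v : List B, IsFactorOf u V → u.length = C * N →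
      IsFactorOf v V → v.length = N → v <:+: u := by
    intro N hN u v hu hulen hv hvlen
    obtain ⟨p, hp⟩ := hv
    rw [hvlen] at hp
    obtain ⟨q, hq⟩ := hu
    rw [hulen] at hq
    obtain ⟨n', hn'1, hn'2⟩ := exists_block ψ W hne p
    obtain ⟨n, hn1, hn2⟩ := exists_block ψ W hne q
    -- v is an infix of the image of a length-N factor of W
    have hE : v <:+: ((factorAt W n' N).map ψ).flatten := by
      rw [hp, ← factorAt_V_eq ψ W V hV' n' N]
      apply factorAt_infix V hn'1
      have h5 : n' + 1 + (N - 1) = n' + N := by omega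
      have h6 := Sfn_lower ψ W hne (n' + 1) (N - 1)
      rw [h5] at h6
      have h7 := Sfn_lower ψ W hne n' N
      omega
    -- u contains the image of a length-(C₃ * N) factor of W
    have hF : ((factorAt W (n + 1) (C₃ * N)).map ψ).flatten <:+: u := by
      rw [hq, ← factorAt_V_eq ψ W V hV' (n + 1) (C₃ * N)]
      apply factorAt_infix V (le_of_lt hn2)
      have hub := Sfn_upper ψ W K hK (n + 1) (C₃ * N)
      have hsucc := Sfn_succ ψ W n
      have hKn := hK n
      have hmono := Sfn_lower ψ W hne (n + 1) (C₃ * N)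
      have harith : K * (C₃ * N) + K ≤ C * N := by
        have h8 : C₃ * N + 1 ≤ (C₃ + 1) * N := by nlinarith
        calc K * (C₃ * N) + K = K * (C₃ * N + 1) := by ring
          _ ≤ K * ((C₃ + 1) * N) := Nat.mul_le_mul_left K h8
          _ = C * N := by rw [hCdef]; ring
      omega
    have hw : factorAt W n' N <:+: factorAt W (n + 1) (C₃ * N) :=
      hrec N hN _ _ (isFactorOf_factorAt W (n + 1) (C₃ * N)) (factorAt_length W _ _)
        (isFactorOf_factorAt W n' N) (factorAt_length W _ _)
    exact hE.trans ((psi_join_infix ψ hw).trans hF)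
  refine ⟨?_, C, key⟩
  intro v hv
  rcases Nat.eq_zero_or_pos v.length with h0 | h1
  · refine ⟨0, fun u hu hul => ?_⟩
    rw [List.length_eq_zero_iff.mp h0]
    exact List.nil_infix
  · exact ⟨C * v.length, fun u hu hul => key v.length h1 u v hu hul hv rfl⟩
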